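/- Let H be a real Hilbert space and A : H →L[ℝ] H a bounded self-adjoint linear operator that is coercive with constant α > 0 (i.e. ⟪A x, x⟫ ≥ α‖x‖² for all x ∈ H). Then for every g ∈ H and every t ≥ 0, the operator exponential satisfies ‖exp(−t • A) g‖ ≤ exp(−α t) · ‖g‖. -/

import Mathlib

open NormedSpace

/-- Semigroup decay for a coercive self-adjoint bounded operator on a real Hilbert space:
`‖exp(-t • A) g‖ ≤ exp(-α t) ‖g‖` for `t ≥ 0`. -/
theorem semigroup_decay
    {H : Type*} [NormedAddCommGroup H] [InnerProductSpace ℝ H] [CompleteSpace H]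
    (A : H →L[ℝ] H) (α : ℝ) (hα : 0 < α)
    (hsa : ∀ x y : H, (inner ℝ (A x) y : ℝ) = inner ℝ x (A y))
    (hcoer : ∀ x : H, α * ‖x‖ ^ 2 ≤ (inner ℝ (A x) x : ℝ))
    (g : H) (t : ℝ) (ht : 0 ≤ t) :
    ‖NormedSpace.exp ((-t) • A) g‖ ≤ Real.exp (-α * t) * ‖g‖ := by
  set u : ℝ → H := fun s => NormedSpace.exp (s • (-A)) g with hu
  -- derivative of u
  have hderiv : ∀ s : ℝ, HasDerivAt u (-(A (u s))) s := by
    intro s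
    have h1 : HasDerivAt (fun s : ℝ => NormedSpace.exp (s • (-A)))
        ((-A) * NormedSpace.exp (s • (-A))) s := hasDerivAt_exp_smul_const' (-A) s
    have h2 := h1.clm_apply (hasDerivAt_const s g)
    simpa [hu, smul_neg] using h2
  -- define h s = exp (2 α s) * ‖u s‖²
  set f : ℝ → ℝ := fun s => Real.exp (2 * α * s) * (inner ℝ (u s) (u s) : ℝ) with hf
  have hfderiv : ∀ s : ℝ, HasDerivAt f
      (2 * α * Real.exp (2 * α * s) * (inner ℝ (u s) (u s) : ℝ)
        + Real.exp (2 * α * s) * ((inner ℝ (u s) (-(A (u s))) : ℝ)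
          + (inner ℝ (-(A (u s))) (u s) : ℝ))) s := by
    intro s
    have he : HasDerivAt (fun s : ℝ => Real.exp (2 * α * s)) (2 * α * Real.exp (2 * α * s)) s := by
      simpa [mul_comm] using ((hasDerivAt_id s).const_mul (2 * α)).exp
    have hi : HasDerivAt (fun s : ℝ => (inner ℝ (u s) (u s) : ℝ))
        ((inner ℝ (u s) (-(A (u s))) : ℝ) + (inner ℝ (-(A (u s))) (u s) : ℝ)) s :=
      (hderiv s).inner ℝ (hderiv s)
    exact he.mul hi
  have hmono : Antitone f := by
    apply antitone_of_hasDerivAt_nonpos hfderiv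
    intro s
    have hc := hcoer (u s)
    have hn : (inner ℝ (u s) (u s) : ℝ) = ‖u s‖ ^ 2 := real_inner_self_eq_norm_sq (u s)
    have hsym : (inner ℝ (u s) (-(A (u s))) : ℝ) = -(inner ℝ (A (u s)) (u s) : ℝ) := by
      rw [inner_neg_right, real_inner_comm]
    have hsym2 : (inner ℝ (-(A (u s))) (u s) : ℝ) = -(inner ℝ (A (u s)) (u s) : ℝ) := by
      rw [inner_neg_left]
    have hepos : (0:ℝ) < Real.exp (2 * α * s) := Real.exp_pos _
    simp only [hsym, hsym2, hn, Pi.zero_apply]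
    nlinarith [mul_le_mul_of_nonneg_left hc (le_of_lt hepos), hepos]
  have key : f t ≤ f 0 := hmono ht
  have hu0 : u 0 = g := by simp [hu, NormedSpace.exp_zero]
  have hf0 : f 0 = ‖g‖ ^ 2 := by
    simp [hf, hu0, real_inner_self_eq_norm_sq]
  have hft : f t = Real.exp (2 * α * t) * ‖u t‖ ^ 2 := by
    simp [hf, real_inner_self_eq_norm_sq]
  have hineq : ‖u t‖ ^ 2 ≤ (Real.exp (-α * t) * ‖g‖) ^ 2 := by
    rw [hft, hf0] at key
    have hepos : (0:ℝ) < Real.exp (2 * α * t) := Real.exp_pos _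
    have h1 : Real.exp (-α * t) ^ 2 = (Real.exp (2 * α * t))⁻¹ := by
      rw [sq, ← Real.exp_add, ← Real.exp_neg]
      ring_nf
    have h2 : Real.exp (2 * α * t) * ((Real.exp (2 * α * t))⁻¹ * ‖g‖ ^ 2) = ‖g‖ ^ 2 := by
      field_simp
    rw [mul_pow, h1, ← mul_le_mul_iff_right₀ hepos, h2]
    exact key
  have hgoal : ‖u t‖ ≤ Real.exp (-α * t) * ‖g‖ := by
    have h1 : 0 ≤ Real.exp (-α * t) * ‖g‖ := by positivity
    nlinarith [norm_nonneg (u t)]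
  have : (-t) • A = t • (-A) := by
    rw [smul_neg, neg_smul]
  rw [this]
  exact hgoal
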